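/- arXiv:2111.04251 — 4 statements merged into one kernel-verified Lean document; each statement's English description precedes it below -/
import Mathlib

section
/- Let α be irrational with continued-fraction denominators (q_n)_{n≥0}, let 𝒜 > 0, and let (n_k)_{k≥0} be a strictly increasing sequence of indices with n₀ = 0 such that, writing Q_k = q_{n_k} and Q̄_k = q_{n_k + 1}, for each k ≥ 1 one has Q_k ≤ (Q̄_{k−1})^{𝒜⁴}, and for each k either Q̄_k ≥ Q_k^𝒜 or the pairs (Q̄_{k−1}, Q_k) and (Q_k, Q_{k+1}) are both CD(𝒜, 𝒜, 𝒜³) bridges. Then Q_k ≥ Q_{k−1}^𝒜 for every k ≥ 1. -/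
open Filter MeasureTheory Matrix
open scoped Real Topology ENNReal

noncomputable section

namespace Paper

/-- The circle `ℝ/ℤ`. -/
abbrev T1 := AddCircle (1 : ℝ)
/-- The projective line `ℝP¹`, identified with `ℝ/(1/2)ℤ`. -/
abbrev RP1 := AddCircle ((1 : ℝ) / 2)
abbrev M2R := Matrix (Fin 2) (Fin 2) ℝ
abbrev M2C := Matrix (Fin 2) (Fin 2) ℂ

instance : Fact ((0:ℝ) < 1) := ⟨one_pos⟩
instance : Fact ((0:ℝ) < 1 / 2) := ⟨by norm_num⟩

/-- canonical representative of a point of `𝕋` in `[0,1)` -/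
def rep1 (x : T1) : ℝ := (AddCircle.equivIco 1 0 x : ℝ)

/-- canonical representative of a point of `ℝP¹` in `[0,1/2)` -/
def repHalf (φ : RP1) : ℝ := (AddCircle.equivIco (1/2) 0 φ : ℝ)

/-- Euclidean operator norm of a real 2×2 matrix. -/
def opNorm (M : M2R) : ℝ :=
  ‖LinearMap.toContinuousLinearMap (Matrix.toEuclideanLin M)‖

/-- Euclidean operator norm of a complex 2×2 matrix. -/
def opNormC (M : M2C) : ℝ :=
  ‖LinearMap.toContinuousLinearMap (Matrix.toEuclideanLin M)‖

/-- unit vector of angle `2πt` -/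
def dirVec (t : ℝ) : EuclideanSpace ℝ (Fin 2) :=
  (WithLp.equiv 2 (Fin 2 → ℝ)).symm ![Real.cos (2*π*t), Real.sin (2*π*t)]

/-- the class in `ℝP¹ = ℝ/(1/2)ℤ` of the line spanned by a (nonzero) vector `v`:
the angle of `v` divided by `2π`, modulo `1/2`. -/
def lineClass (v : EuclideanSpace ℝ (Fin 2)) : RP1 :=
  ((Complex.arg (v 0 + v 1 * Complex.I) / (2*π) : ℝ) : RP1)

/-- the Möbius (projective) action of a matrix on `ℝP¹`. -/
def projAct (M : M2R) (φ : RP1) : RP1 :=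
  lineClass (Matrix.toEuclideanLin M (dirVec (repHalf φ)))

/-- projective skew product `(x,φ) ↦ (x+a, A(x)·φ)` for `A : 𝕋 → SL(2,ℝ)`. -/
def TprojT (a : T1) (A : T1 → M2R) : T1 × RP1 → T1 × RP1 :=
  fun p => (p.1 + a, projAct (A p.1) p.2)

/-- projective skew product for a map given as a `±`-periodic map on `ℝ`. -/
def TprojR (a : T1) (B : ℝ → M2R) : T1 × RP1 → T1 × RP1 :=
  fun p => (p.1 + a, projAct (B (rep1 p.1)) p.2)

/-- Möbius disjointness for a transformation of `𝕋 × ℝP¹`. -/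
def MobiusDisjoint (T : T1 × RP1 → T1 × RP1) : Prop :=
  ∀ f : T1 × RP1 → ℂ, Continuous f → ∀ p : T1 × RP1,
    Tendsto (fun N : ℕ => (N : ℂ)⁻¹ * ∑ n ∈ Finset.Icc 1 N,
      ((ArithmeticFunction.moebius n : ℤ) : ℂ) * f (T^[n] p)) atTop (𝓝 0)

/-- holomorphic on the horizontal strip of half-width `h`, entrywise -/
def HoloStrip (h : ℝ) (F : ℂ → M2C) : Prop :=
  ∀ i j, DifferentiableOn ℂ (fun z => F z i j) {z : ℂ | |z.im| < h}

/-- 1-periodic -/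
def Per1 (F : ℂ → M2C) : Prop := ∀ z, F (z + 1) = F z

/-- `sup`-bound on the strip, i.e. `‖F‖_h ≤ b`. -/
def StripBound (h : ℝ) (F : ℂ → M2C) (b : ℝ) : Prop :=
  ∀ z : ℂ, |z.im| < h → opNormC (F z) ≤ b

def ExtendsT (F : ℂ → M2C) (A : T1 → M2R) : Prop :=
  ∀ x : ℝ, F (x : ℂ) = (A (x : T1)).map Complex.ofReal

def ExtendsR (F : ℂ → M2C) (B : ℝ → M2R) : Prop :=
  ∀ x : ℝ, F (x : ℂ) = (B x).map Complex.ofReal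

/-- `A : 𝕋 → SL(2,ℝ)` is (real-)analytic: it extends to a bounded holomorphic
1-periodic map on some strip. -/
def TorusAnalytic (A : T1 → M2R) : Prop :=
  ∃ h : ℝ, 0 < h ∧ ∃ F : ℂ → M2C, HoloStrip h F ∧ Per1 F ∧
    (∃ b, StripBound h F b) ∧ ExtendsT F A

def RealAnalyticM (B : ℝ → M2R) : Prop :=
  ∀ (i j : Fin 2) (x : ℝ), AnalyticAt ℝ (fun t => B t i j) x

def PMPeriodic (B : ℝ → M2R) : Prop := ∀ x, B (x + 1) = B x ∨ B (x + 1) = - B x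

def Per1R (B : ℝ → M2R) : Prop := ∀ x, B (x + 1) = B x

def SL2V {X : Type*} (B : X → M2R) : Prop := ∀ x, (B x).det = 1

/-- `(α,A)` is (C^ω-)almost reducible. -/
def AlmostReducible (α : ℝ) (A : T1 → M2R) : Prop :=
  ∀ ε : ℝ, 0 < ε → ∃ (B : ℝ → M2R) (D : M2R), D.det = 1 ∧
    RealAnalyticM B ∧ SL2V B ∧ PMPeriodic B ∧
    ∀ x : ℝ, opNorm ((B (x + α))⁻¹ * A (x : T1) * B x - D) < ε

/-- `(α,A)` is reducible. -/
def Reducible (α : ℝ) (A : T1 → M2R) : Prop :=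
  ∃ (B : ℝ → M2R) (D : M2R), D.det = 1 ∧
    RealAnalyticM B ∧ SL2V B ∧ PMPeriodic B ∧
    ∀ x : ℝ, (B (x + α))⁻¹ * A (x : T1) * B x = D

/-- forward cocycle iterates `A_n(x) = A(x+(n-1)α)⋯A(x)`. -/
def fwdA (α : ℝ) (A : T1 → M2R) : ℕ → T1 → M2R
  | 0, _ => 1
  | n + 1, x => A (x + (((n : ℝ) * α : ℝ) : T1)) * fwdA α A n x

/-- backward cocycle iterates `A_{-n}(x) = A(x-nα)⁻¹⋯A(x-α)⁻¹`. -/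
def bwdA (α : ℝ) (A : T1 → M2R) : ℕ → T1 → M2R
  | 0, _ => 1
  | n + 1, x => (A (x - (((n + 1 : ℕ) * α : ℝ) : T1)))⁻¹ * bwdA α A n x

/-- uniform hyperbolicity of the cocycle `(α, A)`, phrased with continuous
stable/unstable line fields (a continuous invariant splitting of `ℝ²`). -/
def UniformlyHyperbolic (α : ℝ) (A : T1 → M2R) : Prop :=
  ∃ Es Eu : T1 → RP1, Continuous Es ∧ Continuous Eu ∧ (∀ x, Es x ≠ Eu x) ∧
    ∃ C : ℝ, 0 < C ∧ ∃ lam : ℝ, 0 < lam ∧ lam < 1 ∧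
      ∀ (x : T1) (n : ℕ), 1 ≤ n →
        (∀ t : ℝ, ‖Matrix.toEuclideanLin (fwdA α A n x) (t • dirVec (repHalf (Es x)))‖
            ≤ C * lam ^ n * ‖t • dirVec (repHalf (Es x))‖) ∧
        (∀ t : ℝ, ‖Matrix.toEuclideanLin (bwdA α A n x) (t • dirVec (repHalf (Eu x)))‖
            ≤ C * lam ^ n * ‖t • dirVec (repHalf (Eu x))‖)

/-- Gauss-map iterates: `α₀ = {α}`, `α_{n+1} = {α_n⁻¹}`. -/
def gaussIter (α : ℝ) : ℕ → ℝ
  | 0 => Int.fract α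
  | n + 1 => Int.fract (gaussIter α n)⁻¹

/-- continued fraction partial quotients `a_k` (for `k ≥ 1`). -/
def cfa (α : ℝ) (k : ℕ) : ℤ := ⌊(gaussIter α (k - 1))⁻¹⌋

/-- continued fraction denominators `q_k`. -/
def cfq (α : ℝ) : ℕ → ℤ
  | 0 => 1
  | 1 => cfa α 1
  | (k + 2) => cfa α (k + 2) * cfq α (k + 1) + cfq α k

/-- `β(α) = limsup (ln q_{k+1})/q_k`, valued in `[0,∞]`. -/
def betaAlpha (α : ℝ) : ℝ≥0∞ :=
  Filter.atTop.limsup fun k : ℕ => ENNReal.ofReal (Real.log (cfq α (k+1)) / (cfq α k))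

/-- `(q_l, q_n)` is a CD(𝒜,ℬ,𝒞) bridge. -/
def CDBridge (α : ℝ) (a b c : ℝ) (l n : ℕ) : Prop :=
  l ≤ n ∧ (∀ i : ℕ, l ≤ i → i < n → (cfq α (i+1) : ℝ) ≤ (cfq α i : ℝ) ^ a) ∧
    (cfq α l : ℝ) ^ b ≤ (cfq α n : ℝ) ∧ (cfq α n : ℝ) ≤ (cfq α l : ℝ) ^ c

/-- the conclusion of the CD-bridge selection lemma (Lemma 2.2 / AFK) for the
subsequence `Q_k = q_{nk k}`, `Q̄_k = q_{nk k + 1}`. -/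
def CDSelection (α : ℝ) (a : ℝ) (nk : ℕ → ℕ) : Prop :=
  StrictMono nk ∧ nk 0 = 0 ∧
  (∀ k : ℕ, 1 ≤ k → (cfq α (nk k) : ℝ) ≤ (cfq α (nk (k-1) + 1) : ℝ) ^ (a^4)) ∧
  (∀ k : ℕ, 1 ≤ k →
     ((cfq α (nk k) : ℝ) ^ a ≤ (cfq α (nk k + 1) : ℝ)) ∨
     (CDBridge α a a (a^3) (nk (k-1) + 1) (nk k) ∧ CDBridge α a a (a^3) (nk k) (nk (k+1))))

/-- entrywise derivative of a matrix-valued map on `ℝ`. -/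
def matDeriv (B : ℝ → M2R) (x : ℝ) : M2R :=
  Matrix.of fun i j => deriv (fun t => B t i j) x

/-- `‖G‖_{C⁰} ≤ b` (over `ℝ`). -/
def C0R (G : ℝ → M2R) (b : ℝ) : Prop := ∀ x, opNorm (G x) ≤ b

/-- `‖B‖_{C¹} ≤ b` (over `ℝ`). -/
def C1R (B : ℝ → M2R) (b : ℝ) : Prop :=
  ∀ x, opNorm (B x) ≤ b ∧ opNorm (matDeriv B x) ≤ b

def C0T (G : T1 → M2R) (b : ℝ) : Prop := ∀ x, opNorm (G x) ≤ b

/-- `‖G‖_{C⁰}` of a map on `𝕋`. -/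
def normC0T (G : T1 → M2R) : ℝ := ⨆ x : T1, opNorm (G x)

/-- `‖B‖_{C¹}` of a map on `ℝ`. -/
def normC1R (B : ℝ → M2R) : ℝ :=
  max (⨆ x : ℝ, opNorm (B x)) (⨆ x : ℝ, opNorm (matDeriv B x))

/-- the rotation `R_ϱ`. -/
def rotM (ϱ : ℝ) : M2R :=
  !![Real.cos (2*π*ϱ), -Real.sin (2*π*ϱ); Real.sin (2*π*ϱ), Real.cos (2*π*ϱ)]

def rotMC (ϱ : ℝ) : M2C := (rotM ϱ).map Complex.ofReal

/-- the parabolic matrix `[[1,c],[0,1]]`. -/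
def parabM (c : ℝ) : M2R := !![1, c; 0, 1]

/-- the Schrödinger cocycle matrix `S_{v,E}`. -/
def schrodM (v : T1 → ℝ) (E : ℝ) (x : T1) : M2R := !![E - v x, -1; 1, 0]



-- ====== measure complexity ======

/-- Bowen average metric `d̄_n`. -/
def bowen (T : T1 × RP1 → T1 × RP1) (n : ℕ) (x y : T1 × RP1) : ℝ :=
  (n : ℝ)⁻¹ * ∑ i ∈ Finset.range n, dist (T^[i] x) (T^[i] y)

/-- `S_n(d, ρ, ε)`, the measure complexity function. -/
def Scomplexity (T : T1 × RP1 → T1 × RP1) (ρ : Measure (T1 × RP1)) (n : ℕ) (ε : ℝ) : ℕ :=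
  sInf {m : ℕ | ∃ c : Fin m → T1 × RP1,
    ρ (⋃ i, {y | bowen T n (c i) y < ε}) > ENNReal.ofReal (1 - ε)}

-- ====== disk measure and random perturbation ======

/-- normalized Lebesgue measure on the closed unit disk of `ℂ`. -/
def diskMeasure : Measure ℂ :=
  (volume (Metric.closedBall (0:ℂ) 1))⁻¹ • volume.restrict (Metric.closedBall (0:ℂ) 1)

/-- the random perturbation `w_t(x) = Σ_{m≥1} ε(m)·2 Re(t_m e^{2πimx})`. -/
def wPert (ε : ℕ → ℝ) (t : ℕ → ℂ) (x : T1) : ℝ :=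
  ∑' m : ℕ, if m = 0 then 0 else
    ε m * (2 * (t m * Complex.exp (2*π*(m:ℝ)*Complex.I*(rep1 x))).re)

-- ====== Fourier coefficients / dual operator / resonances ======

/-- Fourier coefficients `v̂(l)` of a function on `𝕋`. -/
def vhat (v : T1 → ℝ) (l : ℤ) : ℂ :=
  ∫ x in (0:ℝ)..1, (v (x : T1) : ℂ) * Complex.exp (-2*π*Complex.I*l*x)

/-- the eigenvalue equation `Ĥ_{v,α,θ} u = E u` for the dual operator. -/
def DualEigen (α : ℝ) (v : T1 → ℝ) (θ E : ℝ) (u : ℤ → ℂ) : Prop :=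
  ∀ k : ℤ, (∑' l : ℤ, vhat v l * u (k - l))
      + ((2 * Real.cos (2*π*(θ + (k:ℝ)*α)) : ℝ) : ℂ) * u k = (E : ℂ) * u k

/-- `‖x‖_𝕋 = dist(x, ℤ)`. -/
def distZ (x : ℝ) : ℝ := |x - round x|

/-- `k` is an `ε₀`-resonance of `θ`. -/
def IsResonance (α θ ε₀ : ℝ) (k : ℤ) : Prop :=
  distZ (2*θ - (k:ℝ)*α) ≤ Real.exp (-ε₀ * |(k:ℝ)|) ∧
  ∀ j : ℤ, |j| ≤ |k| → distZ (2*θ - (k:ℝ)*α) ≤ distZ (2*θ - (j:ℝ)*α)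

/-- `k, k'` are consecutive `ε₀`-resonances of `θ` (in the ordering by absolute value). -/
def AdjacentResonances (α θ ε₀ : ℝ) (k k' : ℤ) : Prop :=
  IsResonance α θ ε₀ k ∧ IsResonance α θ ε₀ k' ∧ k ≠ k' ∧ |k| ≤ |k'| ∧
  ∀ k'' : ℤ, IsResonance α θ ε₀ k'' → |k''| ≤ |k| ∨ |k'| ≤ |k''|

/-- the family `{Ĥ_{v,α,θ}}_θ` is almost localized with parameters `C₀, C₁, ε₀, ε₁`. -/
def AlmostLocalized (α : ℝ) (v : T1 → ℝ) (C₀ C₁ ε₀ ε₁ : ℝ) : Prop :=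
  ∀ (θ E : ℝ) (u : ℤ → ℂ), DualEigen α v θ E u → u 0 = 1 →
    (∀ k : ℤ, ‖u k‖ ≤ 1 + |(k:ℝ)|) →
    (∀ nj nj1 : ℤ, AdjacentResonances α θ ε₀ nj nj1 →
      ∀ k : ℤ, C₀ * (1 + |(nj:ℝ)|) ≤ |(k:ℝ)| → |(k:ℝ)| ≤ |(nj1:ℝ)| / C₀ →
        ‖u k‖ ≤ C₁ * Real.exp (-ε₁ * |(k:ℝ)|)) ∧
    (∀ nj : ℤ, IsResonance α θ ε₀ nj →
      (∀ k'' : ℤ, IsResonance α θ ε₀ k'' → |k''| ≤ |nj|) →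
      ∀ k : ℤ, C₀ * (1 + |(nj:ℝ)|) ≤ |(k:ℝ)| →
        ‖u k‖ ≤ C₁ * Real.exp (-ε₁ * |(k:ℝ)|))

/-- the truncation `u^I(x) = Σ_{k ∈ I} û_k e^{2πikx}` with
`I = [-⌊m/2⌋, m - ⌊m/2⌋]`. -/
def uI (u : ℤ → ℂ) (m : ℕ) (z : ℂ) : ℂ :=
  ∑ k ∈ Finset.Icc (-((m:ℤ)/2)) ((m:ℤ) - (m:ℤ)/2),
    u k * Complex.exp (2*π*Complex.I*k*z)

/-- `U^I(x) = (e^{2πiθ} u^I(x), u^I(x-α))ᵀ`. -/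
def UIvec (u : ℤ → ℂ) (θ α : ℝ) (m : ℕ) (z : ℂ) : Fin 2 → ℂ :=
  ![Complex.exp (2*π*Complex.I*θ) * uI u m z, uI u m (z - α)]

/-- the complexified Schrödinger matrix `S_{v,E}` on the strip. -/
def SvECmat (E : ℝ) (vc : ℂ → ℂ) (z : ℂ) : M2C := !![(E:ℂ) - vc z, -1; 1, 0]

/-- `vc` is a holomorphic 1-periodic extension of `v` to the strip of width `h`. -/
def ScalarExt (h : ℝ) (v : T1 → ℝ) (vc : ℂ → ℂ) : Prop :=
  DifferentiableOn ℂ vc {z : ℂ | |z.im| < h} ∧ (∀ z, vc (z+1) = vc z) ∧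
    ∀ x : ℝ, vc (x : ℂ) = ((v (x : T1) : ℝ) : ℂ)

/-- `v : 𝕋 → ℝ` is real-analytic. -/
def ScalarTorusAnalytic (v : T1 → ℝ) : Prop :=
  ∃ h : ℝ, 0 < h ∧ ∃ vc : ℂ → ℂ, ScalarExt h v vc ∧
    ∃ b, ∀ z : ℂ, |z.im| < h → ‖vc z‖ ≤ b

-- ====== two-frequency (continuous time) objects ======

/-- `⟨k, ω⟩ = k₁ + k₂ α` for `ω = (1, α)`. -/
def kip (k : ℤ × ℤ) (α : ℝ) : ℝ := (k.1 : ℝ) + (k.2 : ℝ) * α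

/-- `|k| = |k₁| + |k₂|`. -/
def knorm (k : ℤ × ℤ) : ℝ := ((|k.1| + |k.2| : ℤ) : ℝ)

/-- directional derivative `∂_ω B(θ) = d/dt B(θ + tω)|₀`. -/
def dOm (ω : ℝ × ℝ) (B : ℝ × ℝ → M2R) (θ : ℝ × ℝ) : M2R :=
  Matrix.of fun i j => deriv (fun t : ℝ => B (θ.1 + t * ω.1, θ.2 + t * ω.2) i j) 0

/-- Fourier coefficient `F̂(k)` of a function on `𝕋²`. -/
def fhat2 (F : ℝ × ℝ → M2R) (k : ℤ × ℤ) : M2C :=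
  Matrix.of fun i j => ∫ θ in Set.Icc (0:ℝ) 1 ×ˢ Set.Icc (0:ℝ) 1,
    ((F θ i j : ℝ) : ℂ) * Complex.exp (-2*π*Complex.I*((k.1:ℝ)*θ.1 + (k.2:ℝ)*θ.2))

/-- weighted Fourier norm `|F|_h = Σ_k ‖F̂(k)‖ e^{2π|k|h}`, valued in `[0,∞]`. -/
def wnorm2 (h : ℝ) (F : ℝ × ℝ → M2R) : ℝ≥0∞ :=
  ∑' k : ℤ × ℤ, ENNReal.ofReal (opNormC (fhat2 F k) * Real.exp (2*π*(knorm k)*h))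

def Per2 (F : ℝ × ℝ → M2R) : Prop :=
  ∀ θ : ℝ × ℝ, F (θ.1 + 1, θ.2) = F θ ∧ F (θ.1, θ.2 + 1) = F θ

def PMPer2 (B : ℝ × ℝ → M2R) : Prop :=
  ∀ θ : ℝ × ℝ, (B (θ.1 + 1, θ.2) = B θ ∨ B (θ.1 + 1, θ.2) = -B θ) ∧
    (B (θ.1, θ.2 + 1) = B θ ∨ B (θ.1, θ.2 + 1) = -B θ)

def RealAnalytic2 (B : ℝ × ℝ → M2R) : Prop :=
  ∀ (i j : Fin 2) (θ : ℝ × ℝ), AnalyticAt ℝ (fun t => B t i j) θ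

def Cont2 (F : ℝ × ℝ → M2R) : Prop := ∀ i j, Continuous fun θ => F θ i j

def Strip2 (h : ℝ) : Set (ℂ × ℂ) := {z | |z.1.im| < h ∧ |z.2.im| < h}

def HoloStrip2 (h : ℝ) (F : ℂ × ℂ → M2C) : Prop :=
  ∀ i j, DifferentiableOn ℂ (fun z => F z i j) (Strip2 h)

def Per2C (F : ℂ × ℂ → M2C) : Prop :=
  ∀ z : ℂ × ℂ, F (z.1 + 1, z.2) = F z ∧ F (z.1, z.2 + 1) = F z

def StripBound2 (h : ℝ) (F : ℂ × ℂ → M2C) (b : ℝ) : Prop :=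
  ∀ z ∈ Strip2 h, opNormC (F z) ≤ b

def Extends2 (F : ℂ × ℂ → M2C) (G : ℝ × ℝ → M2R) : Prop :=
  ∀ θ : ℝ × ℝ, F ((θ.1 : ℂ), (θ.2 : ℂ)) = (G θ).map Complex.ofReal

/-- `‖B‖_{C¹} ≤ b` for a map on `ℝ²` (sup of `B` and its partial derivatives). -/
def C1R2 (B : ℝ × ℝ → M2R) (b : ℝ) : Prop :=
  ∀ θ : ℝ × ℝ, opNorm (B θ) ≤ b ∧
    opNorm (Matrix.of fun i j => deriv (fun t => B (θ.1 + t, θ.2) i j) 0) ≤ b ∧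
    opNorm (Matrix.of fun i j => deriv (fun t => B (θ.1, θ.2 + t) i j) 0) ≤ b

/-- `A = 2πϱJ` with `J = [[0,1],[-1,0]]`. -/
def rotGen (ϱ : ℝ) : M2R := !![0, 2*π*ϱ; -(2*π*ϱ), 0]

/-- `[[0,c],[0,0]]`. -/
def parabGen (c : ℝ) : M2R := !![0, c; 0, 0]

def parabGenC (c : ℝ) : M2C := (parabGen c).map Complex.ofReal

lemma gauss_irr (α : ℝ) (hα : Irrational α) : ∀ n, Irrational (gaussIter α n)
  | 0 => by
    have h := hα.sub_intCast ⌊α⌋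
    rw [show gaussIter α 0 = Int.fract α from rfl, Int.fract]
    exact h
  | n + 1 => by
    have h := ((gauss_irr α hα n).inv).sub_intCast ⌊(gaussIter α n)⁻¹⌋
    rw [show gaussIter α (n+1) = Int.fract (gaussIter α n)⁻¹ from rfl, Int.fract]
    exact h

lemma gauss_mem (α : ℝ) (hα : Irrational α) (n : ℕ) :
    0 < gaussIter α n ∧ gaussIter α n < 1 := by
  have hirr := gauss_irr α hα n
  have h0 : gaussIter α n ≠ 0 := hirr.ne_zero
  cases n with
  | zero =>
    exact ⟨lt_of_le_of_ne (Int.fract_nonneg α) (Ne.symm h0), Int.fract_lt_one α⟩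
  | succ m =>
    exact ⟨lt_of_le_of_ne (Int.fract_nonneg _) (Ne.symm h0), Int.fract_lt_one _⟩

lemma cfa_pos (α : ℝ) (hα : Irrational α) (k : ℕ) : 1 ≤ cfa α k := by
  obtain ⟨h0, h1⟩ := gauss_mem α hα (k - 1)
  have : (1 : ℝ) ≤ (gaussIter α (k - 1))⁻¹ := by
    rw [le_inv_comm₀ one_pos h0]; simpa using h1.le
  exact_mod_cast Int.le_floor.2 (by exact_mod_cast this)

lemma cfq_pos (α : ℝ) (hα : Irrational α) : ∀ n, 1 ≤ cfq α n
  | 0 => le_refl _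
  | 1 => cfa_pos α hα 1
  | (n + 2) => by
    have h1 := cfq_pos α hα (n + 1)
    have h2 := cfq_pos α hα n
    have h3 := cfa_pos α hα (n + 2)
    have : 1 * 1 + 1 ≤ cfa α (n+2) * cfq α (n+1) + cfq α n :=
      add_le_add (mul_le_mul h3 h1 one_pos.le (by linarith)) h2
    calc (1:ℤ) ≤ 1*1+1 := by norm_num
    _ ≤ _ := this
    _ = cfq α (n+2) := rfl

lemma cfq_mono_succ (α : ℝ) (hα : Irrational α) : ∀ n, cfq α n ≤ cfq α (n+1)
  | 0 => cfa_pos α hα 1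
  | (n + 1) => by
    have h1 := cfq_pos α hα (n + 1)
    have h2 := cfq_pos α hα n
    have h3 := cfa_pos α hα (n + 2)
    have : cfq α (n+1) ≤ cfa α (n+2) * cfq α (n+1) + cfq α n := by nlinarith
    exact this

lemma cfq_mono (α : ℝ) (hα : Irrational α) : Monotone (cfq α) :=
  monotone_nat_of_le_succ (cfq_mono_succ α hα)

/-- For a subsequence as produced by the CD-bridge selection
lemma, `Q_k ≥ Q_{k-1}^𝒜` for every `k ≥ 1`. -/
theorem cd_bridge_selection_growth (α : ℝ) (hα : Irrational α) (a : ℝ) (ha : 0 < a)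
    (nk : ℕ → ℕ) (hsel : CDSelection α a nk) :
    ∀ k : ℕ, 1 ≤ k → (cfq α (nk (k-1)) : ℝ) ^ a ≤ (cfq α (nk k) : ℝ) := by
  intro k hk
  obtain ⟨hSM, hn0, _, hdisj⟩ := hsel
  have hq1 : ∀ n, (1:ℝ) ≤ (cfq α n : ℝ) := fun n => by exact_mod_cast cfq_pos α hα n
  rcases Nat.lt_or_ge k 2 with hk2 | hk2
  · have hk1 : k = 1 := by omega
    subst hk1
    have h0 : (cfq α (nk (1-1)) : ℝ) = 1 := by
      rw [show (1:ℕ)-1 = 0 from rfl, hn0, show cfq α 0 = 1 from rfl]; norm_num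
    rw [h0, Real.one_rpow]
    exact hq1 _
  · rcases hdisj (k-1) (by omega) with h1 | ⟨_, hb2⟩
    · have hle : nk (k-1) + 1 ≤ nk k := hSM (show k-1 < k by omega)
      have hm : (cfq α (nk (k-1) + 1) : ℝ) ≤ (cfq α (nk k) : ℝ) := by
        exact_mod_cast cfq_mono α hα hle
      exact h1.trans hm
    · have hkk : k - 1 + 1 = k := by omega
      rw [hkk] at hb2
      exact hb2.2.2.1

end Paper

end
end

section
/- Let α ∈ ℝ be irrational, ω = (1, α) ∈ ℝ², h' > 0, and 0 < η ≤ 10⁻². Let A = [[0, c*], [0, 0]] with |c*| ≤ 1 (c* ∈ ℝ). Let Y : 𝕋² → sl(2,ℝ) be a map with absolutely convergent weighted Fourier series |Y|_{h'} = Σ_{k∈ℤ²} ‖Ŷ(k)‖ e^{2π|k|h'} < ∞, whose Fourier support is contained in {k ∈ ℤ² : |⟨k, ω⟩| ≥ η^{1/3}} (i.e., Ŷ(k) = 0 whenever |⟨k, ω⟩| < η^{1/3}). Then the map Z := ∂_ω Y − [A, Y] (where (∂_ω Y)(θ) = Σ_k 2πi⟨k, ω⟩ Ŷ(k) e^{2πi⟨k,θ⟩}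 and [A, Y] = AY − YA) has Fourier support in the same set and satisfies |∂_ω Y − [A, Y]|_{h'} ≥ η |Y|_{h'}. -/
open Filter MeasureTheory Matrix
open scoped Real Topology ENNReal

noncomputable section

namespace Paper

-- ===== auxiliary lemmas for Statement 14 =====

lemma opNormC_nonneg (M : M2C) : 0 ≤ opNormC M := norm_nonneg _

lemma opNormC_zero : opNormC 0 = 0 := by
  unfold opNormC
  rw [_root_.map_zero, _root_.map_zero, norm_zero]

lemma opNormC_smul (a : ℂ) (M : M2C) : opNormC (a • M) = ‖a‖ * opNormC M := by
  unfold opNormC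
  rw [_root_.map_smul, _root_.map_smul]
  exact norm_smul (β := EuclideanSpace ℂ (Fin 2) →L[ℂ] EuclideanSpace ℂ (Fin 2)) a _

lemma opNormC_add_le (M N : M2C) : opNormC (M + N) ≤ opNormC M + opNormC N := by
  unfold opNormC
  rw [map_add, map_add]
  exact norm_add_le _ _

lemma opNormC_neg (M : M2C) : opNormC (-M) = opNormC M := by
  unfold opNormC
  rw [map_neg, map_neg, norm_neg]

lemma opNormC_sub_le (M N : M2C) : opNormC (M - N) ≤ opNormC M + opNormC N := by
  rw [sub_eq_add_neg]
  calc opNormC (M + -N) ≤ opNormC M + opNormC (-N) := opNormC_add_le _ _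
  _ = opNormC M + opNormC N := by rw [opNormC_neg]

lemma opNormC_mul_le (M N : M2C) : opNormC (M * N) ≤ opNormC M * opNormC N := by
  unfold opNormC
  have h : Matrix.toEuclideanLin (M * N) =
      (Matrix.toEuclideanLin M).comp (Matrix.toEuclideanLin N) := by
    rw [Matrix.toEuclideanLin_eq_toLin, Matrix.toLin_mul _ (PiLp.basisFun 2 ℂ (Fin 2)) _]
  have h2 : LinearMap.toContinuousLinearMap (Matrix.toEuclideanLin (M * N)) =
      (LinearMap.toContinuousLinearMap (Matrix.toEuclideanLin M)).comp
        (LinearMap.toContinuousLinearMap (Matrix.toEuclideanLin N)) := by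
    ext x
    rw [h]; rfl
  rw [h2]
  exact ContinuousLinearMap.opNorm_comp_le _ _

lemma parabGenC_eq (c : ℝ) : parabGenC c = !![0, (c:ℂ); 0, 0] := by
  unfold parabGenC parabGen
  ext i j
  fin_cases i <;> fin_cases j <;> simp [Matrix.map_apply]

lemma parabGenC_sq (c : ℝ) : parabGenC c * parabGenC c = 0 := by
  rw [parabGenC_eq]
  ext i j
  fin_cases i <;> fin_cases j <;>
    simp [Matrix.mul_apply, Fin.sum_univ_two]

lemma opNormC_parabGenC (c : ℝ) (hc : |c| ≤ 1) : opNormC (parabGenC c) ≤ 1 := by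
  unfold opNormC
  refine ContinuousLinearMap.opNorm_le_bound _ zero_le_one ?_
  intro x
  have happ : LinearMap.toContinuousLinearMap (Matrix.toEuclideanLin (parabGenC c)) x
      = (WithLp.equiv 2 (Fin 2 → ℂ)).symm ![(c:ℂ) * (x 1), 0] := by
    rw [LinearMap.coe_toContinuousLinearMap', Matrix.toEuclideanLin_apply, parabGenC_eq]
    congr 1
    funext i
    fin_cases i <;>
      simp [Matrix.mulVec, dotProduct, Fin.sum_univ_two, Matrix.vecHead, Matrix.vecTail]
  rw [happ]
  have hx1 : ‖x 1‖ ≤ ‖x‖ := by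
    rw [EuclideanSpace.norm_eq]
    rw [show (Finset.univ : Finset (Fin 2)) = {0, 1} by decide]
    rw [Finset.sum_insert (by decide), Finset.sum_singleton]
    have h1 : ‖x 1‖ ≤ Real.sqrt (‖x 0‖ ^ 2 + ‖x 1‖ ^ 2) := by
      have h2 : ‖x 1‖ = Real.sqrt (‖x 1‖ ^ 2) := (Real.sqrt_sq (norm_nonneg _)).symm
      nlinarith [Real.sqrt_le_sqrt (show ‖x 1‖ ^ 2 ≤ ‖x 0‖ ^ 2 + ‖x 1‖ ^ 2 by
        nlinarith [sq_nonneg ‖x 0‖])]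
    exact h1
  have hnv : ‖(WithLp.equiv 2 (Fin 2 → ℂ)).symm ![(c:ℂ) * (x 1), 0]‖ = ‖(c:ℂ) * x 1‖ := by
    rw [EuclideanSpace.norm_eq]
    rw [show (Finset.univ : Finset (Fin 2)) = {0, 1} by decide]
    rw [Finset.sum_insert (by decide), Finset.sum_singleton]
    simp [Real.sqrt_sq_eq_abs]
  rw [hnv, norm_mul, Complex.norm_real, Real.norm_eq_abs]
  calc |c| * ‖x 1‖ ≤ 1 * ‖x‖ := mul_le_mul hc hx1 (norm_nonneg (x 1)) zero_le_one
  _ = 1 * ‖x‖ := rfl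


set_option maxHeartbeats 1000000 in
lemma scalar_ineq (η s t : ℝ) (hη0 : 0 < η) (hs0 : 0 < s) (hs1 : s ≤ 1)
    (hs3 : s ^ (3:ℕ) = η) (ht0 : 0 < t) (hts : 2*π*s ≤ t) :
    η * (t^2 + 2*t + 4) ≤ t^3 := by
  have hpi : (3:ℝ) ≤ π := by linarith [Real.pi_gt_three]
  have hss : s * s ≤ 1 := mul_le_one₀ hs1 hs0.le hs1
  have hηs : η ≤ s := by nlinarith [hs0.le]
  have hηs2 : η ≤ s^2 := by nlinarith [hs0.le, sq_nonneg s]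
  have hπ2 : (9:ℝ) ≤ π^2 := by nlinarith
  have hπ3 : (27:ℝ) ≤ π^3 := by nlinarith
  have ha : 2*π*η ≤ t := le_trans (by nlinarith) hts
  have a1 : 2*π*(η*t^2) ≤ t^3 := by nlinarith [sq_nonneg t, mul_nonneg (le_trans (by positivity) ha : (0:ℝ) ≤ t) ht0.le, mul_le_mul_of_nonneg_right ha (sq_nonneg t)]
  have h2ps : (0:ℝ) < 2*π*s := by positivity
  have hsq : (2*π*s)^2 ≤ t^2 := pow_le_pow_left₀ h2ps.le hts 2
  have hb : 4*π^2*η ≤ t^2 := by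
    nlinarith [hsq, mul_le_mul_of_nonneg_left hηs2 (by positivity : (0:ℝ) ≤ 4*π^2)]
  have a2 : 2*π^2*(2*η*t) ≤ t^3 := by
    nlinarith [mul_le_mul_of_nonneg_right hb ht0.le]
  have a3 : 2*π^3*(4*η) ≤ t^3 := by
    have hcube : (2*π*s)^3 ≤ t^3 := pow_le_pow_left₀ h2ps.le hts 3
    nlinarith [hcube, mul_le_mul_of_nonneg_left hηs2 (by positivity : (0:ℝ) ≤ 8*π^3), hηs]
  have hb1 : 6*(η*t^2) ≤ t^3 := by
    nlinarith [a1, mul_nonneg hη0.le (sq_nonneg t)]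
  have hb2 : 18*(2*η*t) ≤ t^3 := by
    nlinarith [a2, mul_nonneg hη0.le ht0.le]
  have hb3 : 54*(4*η) ≤ t^3 := by
    nlinarith [a3, hη0.le]
  nlinarith [hb1, hb2, hb3]

/-- Non-resonant lower bound in the parabolic case
(Corollary 5.10): if the (matrix-valued) Fourier coefficients `Ŷ(k)` of an
`sl(2,ℝ)`-valued map `Y` on `𝕋²` are supported on `{|⟨k,ω⟩| ≥ η^{1/3}}`, then
the coefficients of `Z = ∂_ω Y − [A,Y]` (namely `2πi⟨k,ω⟩Ŷ(k) − [A,Ŷ(k)]`)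
have the same support and `|Z|_{h'} ≥ η |Y|_{h'}` (weighted `ℓ¹` norms taken
in `[0,∞]`). -/
theorem parabolic_nonresonant_lower_bound
    (α : ℝ) (hα : Irrational α) (h' η cst : ℝ)
    (hh' : 0 < h') (hη0 : 0 < η) (hη : η ≤ 1/100) (hc : |cst| ≤ 1)
    (Yh : ℤ × ℤ → M2C)
    (hreal : ∀ k : ℤ × ℤ, Yh (-k.1, -k.2) = (Yh k).map (starRingEnd ℂ))
    (htr : ∀ k, (Yh k).trace = 0)
    (hsupp : ∀ k : ℤ × ℤ, |kip k α| < η ^ ((1:ℝ)/3) → Yh k = 0)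
    (hfin : (∑' k : ℤ × ℤ,
      ENNReal.ofReal (opNormC (Yh k) * Real.exp (2*π*(knorm k)*h'))) ≠ ⊤) :
    (∀ k : ℤ × ℤ, |kip k α| < η ^ ((1:ℝ)/3) →
      (((2*π*(kip k α) : ℝ) : ℂ) * Complex.I) • Yh k
        - (parabGenC cst * Yh k - Yh k * parabGenC cst) = 0) ∧
    ENNReal.ofReal η *
        (∑' k : ℤ × ℤ, ENNReal.ofReal (opNormC (Yh k) * Real.exp (2*π*(knorm k)*h')))
      ≤ ∑' k : ℤ × ℤ, ENNReal.ofReal (opNormC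
          ((((2*π*(kip k α) : ℝ) : ℂ) * Complex.I) • Yh k
            - (parabGenC cst * Yh k - Yh k * parabGenC cst))
          * Real.exp (2*π*(knorm k)*h')) := by
  have hpi : (3:ℝ) ≤ π := by linarith [Real.pi_gt_three]
  set s := η ^ ((1:ℝ)/3) with hsdef
  have hs0 : 0 < s := Real.rpow_pos_of_pos hη0 _
  have hs1 : s ≤ 1 := Real.rpow_le_one hη0.le (by linarith) (by norm_num)
  have hs3 : s ^ (3:ℕ) = η := by
    rw [hsdef, ← Real.rpow_natCast (η ^ ((1:ℝ)/3)) 3, ← Real.rpow_mul hη0.le]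
    norm_num
  set A := parabGenC cst with hAdef
  have hA2 : A * A = 0 := parabGenC_sq cst
  have hAn : opNormC A ≤ 1 := opNormC_parabGenC cst hc
  -- commutator helpers
  have comm_smul : ∀ (a : ℂ) (M : M2C), A*(a•M) - (a•M)*A = a • (A*M - M*A) := by
    intro a M
    rw [Matrix.mul_smul, Matrix.smul_mul, smul_sub]
  have comm_sub : ∀ M N : M2C, A*(M-N) - (M-N)*A = (A*M - M*A) - (A*N - N*A) := by
    intro M N
    rw [Matrix.mul_sub, Matrix.sub_mul]
    abel
  have hA2' : ∀ X : M2C, A*(A*X) = 0 := by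
    intro X
    rw [← Matrix.mul_assoc, hA2, Matrix.zero_mul]
  have comm3 : ∀ M : M2C,
      A*(A*(A*M - M*A) - (A*M - M*A)*A) - (A*(A*M - M*A) - (A*M - M*A)*A)*A = 0 := by
    intro M
    simp only [Matrix.mul_sub, Matrix.sub_mul, Matrix.mul_assoc, hA2', hA2,
      Matrix.mul_zero, Matrix.zero_mul]
    abel
  have comm_norm : ∀ M : M2C, opNormC (A*M - M*A) ≤ 2 * opNormC M := by
    intro M
    calc opNormC (A*M - M*A) ≤ opNormC (A*M) + opNormC (M*A) := opNormC_sub_le _ _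
    _ ≤ opNormC A * opNormC M + opNormC M * opNormC A := by
        exact add_le_add (opNormC_mul_le _ _) (opNormC_mul_le _ _)
    _ ≤ 1 * opNormC M + opNormC M * 1 := by
        have h0 := opNormC_nonneg M
        have h1 := opNormC_nonneg A
        nlinarith
    _ = 2 * opNormC M := by ring
  -- the key termwise inequality
  have key : ∀ k : ℤ × ℤ, η * opNormC (Yh k) ≤ opNormC
      ((((2*π*(kip k α) : ℝ) : ℂ) * Complex.I) • Yh k - (A * Yh k - Yh k * A)) := by
    intro k
    by_cases hk : |kip k α| < s
    · rw [hsupp k hk]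
      simp only [smul_zero, Matrix.mul_zero, Matrix.zero_mul, sub_zero, sub_self]
      rw [opNormC_zero]
      exact le_of_eq (mul_zero η)
    · push_neg at hk
      set μ : ℂ := (((2*π*(kip k α) : ℝ) : ℂ) * Complex.I) with hμdef
      set Y := Yh k with hYdef
      set Z := μ • Y - (A * Y - Y * A) with hZdef
      set t : ℝ := 2*π*|kip k α| with htdef
      have ht0 : 0 < t := by
        have : 0 < |kip k α| := lt_of_lt_of_le hs0 hk
        positivity
      have hμn : ‖μ‖ = t := by
        rw [hμdef, norm_mul, Complex.norm_I, mul_one, Complex.norm_real,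
          Real.norm_eq_abs, htdef, abs_mul]
        rw [abs_of_pos (by positivity : (0:ℝ) < 2*π)]
      have hts : 2*π*s ≤ t := by
        rw [htdef]
        have : (0:ℝ) < 2*π := by positivity
        nlinarith
      -- the algebraic identity
      have e1 : A*Z - Z*A = μ • (A*Y - Y*A) - (A*(A*Y - Y*A) - (A*Y - Y*A)*A) := by
        rw [hZdef, comm_sub, comm_smul]
      have e2 : A*(A*Z - Z*A) - (A*Z - Z*A)*A
          = μ • (A*(A*Y - Y*A) - (A*Y - Y*A)*A) := by
        rw [e1, comm_sub, comm_smul, comm3 Y, sub_zero]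
      have adid : (μ^3) • Y = μ^2 • Z + μ • (A*Z - Z*A) + (A*(A*Z - Z*A) - (A*Z - Z*A)*A) := by
        rw [e2, e1, hZdef]
        module
      -- norm estimates
      have hY0 := opNormC_nonneg Y
      have hZ0 := opNormC_nonneg Z
      have h1 : t^3 * opNormC Y ≤ (t^2 + 2*t + 4) * opNormC Z := by
        have lhs_eq : opNormC ((μ^3) • Y) = t^3 * opNormC Y := by
          rw [opNormC_smul, norm_pow, hμn]
        have b1 : opNormC (μ^2 • Z) = t^2 * opNormC Z := by
          rw [opNormC_smul, norm_pow, hμn]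
        have b2 : opNormC (μ • (A*Z - Z*A)) ≤ t * (2 * opNormC Z) := by
          rw [opNormC_smul, hμn]
          exact mul_le_mul_of_nonneg_left (comm_norm Z) ht0.le
        have b3 : opNormC (A*(A*Z - Z*A) - (A*Z - Z*A)*A) ≤ 4 * opNormC Z := by
          calc opNormC (A*(A*Z - Z*A) - (A*Z - Z*A)*A) ≤ 2 * opNormC (A*Z - Z*A) :=
              comm_norm _
          _ ≤ 2 * (2 * opNormC Z) := by
              have := comm_norm Z
              linarith
          _ = 4 * opNormC Z := by ring
        calc t^3 * opNormC Y = opNormC ((μ^3) • Y) := lhs_eq.symm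
        _ = opNormC (μ^2 • Z + μ • (A*Z - Z*A) + (A*(A*Z - Z*A) - (A*Z - Z*A)*A)) := by
            rw [adid]
        _ ≤ opNormC (μ^2 • Z + μ • (A*Z - Z*A))
              + opNormC (A*(A*Z - Z*A) - (A*Z - Z*A)*A) := opNormC_add_le _ _
        _ ≤ opNormC (μ^2 • Z) + opNormC (μ • (A*Z - Z*A))
              + opNormC (A*(A*Z - Z*A) - (A*Z - Z*A)*A) := by
            have := opNormC_add_le (μ^2 • Z) (μ • (A*Z - Z*A))
            linarith
        _ ≤ t^2 * opNormC Z + t * (2 * opNormC Z) + 4 * opNormC Z := by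
            rw [b1]; linarith
        _ = (t^2 + 2*t + 4) * opNormC Z := by ring
      -- scalar inequality : η (t² + 2t + 4) ≤ t³
      have h2 : η * (t^2 + 2*t + 4) ≤ t^3 :=
        scalar_ineq η s t hη0 hs0 hs1 hs3 ht0 hts
      -- conclude
      have h3 : t^3 * (η * opNormC Y) ≤ t^3 * opNormC Z := by
        calc t^3 * (η * opNormC Y) = η * (t^3 * opNormC Y) := by ring
        _ ≤ η * ((t^2 + 2*t + 4) * opNormC Z) := by
            exact mul_le_mul_of_nonneg_left h1 hη0.le
        _ = (η * (t^2 + 2*t + 4)) * opNormC Z := by ring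
        _ ≤ t^3 * opNormC Z := mul_le_mul_of_nonneg_right h2 hZ0
      exact le_of_mul_le_mul_left h3 (by positivity)
  constructor
  · intro k hk
    rw [hsupp k hk]
    simp only [smul_zero, Matrix.mul_zero, Matrix.zero_mul, sub_zero, sub_self]
  · rw [← ENNReal.tsum_mul_left]
    refine ENNReal.tsum_le_tsum fun k => ?_
    rw [← ENNReal.ofReal_mul hη0.le]
    refine ENNReal.ofReal_le_ofReal ?_
    rw [← mul_assoc]
    exact mul_le_mul_of_nonneg_right (key k) (Real.exp_nonneg _)


end Paper

end
end

section
/- Let α ∈ ℝ be irrational with continued-fraction denominators (q_n), let ω = (1, α), and let 𝒜 > 0, ϱ̃ ∈ ℝ. Suppose 0 < η ≤ 1/(4 q_n^{𝒜⁴}) and q_{n+l} ≤ q_n^{𝒜⁴} for some l ∈ ℕ. Then: (1) every k ∈ ℤ² with 0 < |k| < q_{n+l} satisfies |⟨k, ω⟩| ≥ η; (2) there is at most one k ∈ ℤ² with |k| < q_{n+l}/2 and |2ϱ̃ − ⟨k, ω⟩| < η, and at most one k ∈ ℤ² with |k| < q_{n+l}/2 and |2ϱ̃ + ⟨k, ω⟩|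 < η. -/
open Filter MeasureTheory Matrix
open scoped Real Topology ENNReal

noncomputable section

namespace Paper

namespace CFAux

variable (α : ℝ)

lemma cfq_zero : cfq α 0 = 1 := by rw [cfq]
lemma cfq_one : cfq α 1 = cfa α 1 := by rw [cfq]
lemma cfq_two (k : ℕ) : cfq α (k+2) = cfa α (k+2) * cfq α (k+1) + cfq α k := by rw [cfq]

lemma fract_irrational {x : ℝ} (h : Irrational x) : Irrational (Int.fract x) := by
  rw [← Int.self_sub_floor]
  exact h.sub_intCast ⌊x⌋

lemma gauss_irrational (hα : Irrational α) : ∀ k, Irrational (gaussIter α k)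
  | 0 => fract_irrational hα
  | (k+1) => fract_irrational ((gauss_irrational hα k).inv)

lemma irr_ne_zero {x : ℝ} (h : Irrational x) : x ≠ 0 :=
  fun hx => (h.ne_int 0) (by exact_mod_cast hx)

lemma gauss_pos (hα : Irrational α) (k : ℕ) : 0 < gaussIter α k := by
  have hne : gaussIter α k ≠ 0 := irr_ne_zero (gauss_irrational α hα k)
  have hnn : 0 ≤ gaussIter α k := by
    cases k with
    | zero => exact Int.fract_nonneg _
    | succ n => exact Int.fract_nonneg _
  exact lt_of_le_of_ne hnn (Ne.symm hne)

lemma gauss_lt_one (k : ℕ) : gaussIter α k < 1 := by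
  cases k with
  | zero => exact Int.fract_lt_one _
  | succ n => exact Int.fract_lt_one _

lemma gauss_succ (k : ℕ) :
    gaussIter α (k+1) = (gaussIter α k)⁻¹ - cfa α (k+1) := by
  have h1 : gaussIter α (k+1) = Int.fract (gaussIter α k)⁻¹ := rfl
  rw [h1, ← Int.self_sub_floor]
  have : cfa α (k+1) = ⌊(gaussIter α k)⁻¹⌋ := by simp [cfa]
  rw [this]

lemma cfa_one_le (hα : Irrational α) (k : ℕ) : 1 ≤ cfa α (k+1) := by
  have h0 := gauss_pos α hα k
  have h1 := gauss_lt_one α k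
  have h2 : (1:ℝ) ≤ (gaussIter α k)⁻¹ := by
    nlinarith [mul_inv_cancel₀ (ne_of_gt h0), inv_pos.2 h0]
  have : cfa α (k+1) = ⌊(gaussIter α k)⁻¹⌋ := by simp [cfa]
  rw [this]
  exact Int.le_floor.2 (by exact_mod_cast h2)

lemma cfq_pos (hα : Irrational α) : ∀ k, 1 ≤ cfq α k := by
  intro k
  induction k using Nat.twoStepInduction with
  | zero => simp [cfq_zero]
  | one => rw [cfq_one]; exact cfa_one_le α hα 0
  | more n ih1 ih2 =>
      rw [cfq_two]
      have ha := cfa_one_le α hα (n+1)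
      nlinarith

lemma cfq_le_succ (hα : Irrational α) (k : ℕ) : cfq α k ≤ cfq α (k+1) := by
  cases k with
  | zero => rw [cfq_zero, cfq_one]; exact cfa_one_le α hα 0
  | succ n =>
      rw [cfq_two]
      have ha := cfa_one_le α hα (n+1)
      have h1 := cfq_pos α hα n
      have h2 := cfq_pos α hα (n+1)
      nlinarith

/-- product of Gauss iterates -/
def Pg (k : ℕ) : ℝ := ∏ i ∈ Finset.range (k+1), gaussIter α i

lemma Pg_pos (hα : Irrational α) (k : ℕ) : 0 < Pg α k :=
  Finset.prod_pos fun i _ => gauss_pos α hα i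

lemma Pg_succ (k : ℕ) : Pg α (k+1) = Pg α k * gaussIter α (k+1) := by
  simp [Pg, Finset.prod_range_succ]

lemma Pg_le (hα : Irrational α) (k : ℕ) : Pg α (k+1) ≤ Pg α k := by
  rw [Pg_succ]
  nlinarith [Pg_pos α hα k, gauss_pos α hα (k+1), gauss_lt_one α (k+1)]

/-- continued fraction numerators -/
def cfp : ℕ → ℤ
  | 0 => 0
  | 1 => 1
  | (k + 2) => cfa α (k + 2) * cfp (k + 1) + cfp k

lemma cfp_zero : cfp α 0 = 0 := by rw [cfp]
lemma cfp_one : cfp α 1 = 1 := by rw [cfp]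
lemma cfp_two (k : ℕ) : cfp α (k+2) = cfa α (k+2) * cfp α (k+1) + cfp α k := by rw [cfp]

lemma key (hα : Irrational α) :
    ∀ k, (cfq α k : ℝ) * Int.fract α - cfp α k = (-1)^k * Pg α k := by
  intro k
  induction k using Nat.twoStepInduction with
  | zero =>
      rw [cfq_zero, cfp_zero]
      have : Pg α 0 = Int.fract α := by simp [Pg]; rfl
      rw [this]; push_cast; ring
  | one =>
      rw [cfq_one, cfp_one, Pg_succ, gauss_succ]
      have hg0 : Pg α 0 = gaussIter α 0 := by simp [Pg]
      have hfr : gaussIter α 0 = Int.fract α := rfl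
      have hne : Int.fract α ≠ 0 := irr_ne_zero (fract_irrational hα)
      rw [hg0, hfr]
      norm_num
      field_simp
      ring
  | more n ih1 ih2 =>
      rw [cfq_two, cfp_two]
      have hgn : gaussIter α (n+1) ≠ 0 := irr_ne_zero (gauss_irrational α hα (n+1))
      have hP2 : Pg α (n+2) = Pg α n - (cfa α (n+2) : ℝ) * Pg α (n+1) := by
        rw [Pg_succ α (n+1), gauss_succ α (n+1), mul_sub]
        have h3 : Pg α (n+1) * (gaussIter α (n+1))⁻¹ = Pg α n := by
          rw [Pg_succ α n]; field_simp
        rw [h3, show n+1+1 = n+2 from rfl]; ring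
      push_cast
      rw [hP2]
      linear_combination (cfa α (n+2) : ℝ) * ih2 + ih1

lemma det (hα : Irrational α) :
    ∀ k, cfq α (k+1) * cfp α k - cfp α (k+1) * cfq α k = (-1)^(k+1) := by
  intro k
  induction k with
  | zero => rw [cfq_one, cfp_zero, cfp_one, cfq_zero]; ring
  | succ n ih =>
      rw [cfq_two, cfp_two]
      linear_combination (-1 : ℤ) * ih

lemma lowerP (hα : Irrational α) (m : ℕ) :
    1 ≤ ((cfq α m : ℝ) + cfq α (m+1)) * Pg α m := by
  have h1 := key α hα m
  have h2 := key α hα (m+1)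
  have hd : ((cfq α (m+1) : ℝ) * cfp α m - cfp α (m+1) * cfq α m) = (-1)^(m+1) := by
    exact_mod_cast congrArg (Int.cast : ℤ → ℝ) (det α hα m)
  set s : ℝ := (-1)^m with hsdef
  have hs : s * s = 1 := by rw [hsdef, ← mul_pow]; norm_num
  have hms : ((-1:ℝ))^(m+1) = -s := by rw [pow_succ]; ring
  rw [hms] at h2 hd
  have hX : s * ((cfq α (m+1) : ℝ) * Pg α m + (cfq α m : ℝ) * Pg α (m+1)) = s := by
    linear_combination -(cfq α (m+1) : ℝ) * h1 + (cfq α m : ℝ) * h2 - hd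
  have hX1 : (cfq α (m+1) : ℝ) * Pg α m + (cfq α m : ℝ) * Pg α (m+1) = 1 := by
    linear_combination s * hX + (1 - ((cfq α (m+1) : ℝ) * Pg α m + (cfq α m : ℝ) * Pg α (m+1))) * hs
  have hq1 : (1:ℝ) ≤ (cfq α m : ℝ) := by exact_mod_cast cfq_pos α hα m
  have hle := Pg_le α hα m
  have hp1 := Pg_pos α hα (m+1)
  nlinarith

lemma best_approx (hα : Irrational α) (m : ℕ) (r p : ℤ) (hp : p ≠ 0)
    (hlt : |p| < cfq α (m+1)) :
    1 / (2 * (cfq α (m+1) : ℝ)) ≤ |(r : ℝ) + (p : ℝ) * Int.fract α| := by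
  have hdZ := det α hα m
  have hsZ : ((-1:ℤ))^m * (-1)^m = 1 := by rw [← mul_pow]; norm_num
  set x : ℤ := (-1)^m * (p * cfp α (m+1) + r * cfq α (m+1)) with hxdef
  set y : ℤ := (-1)^(m+1) * (r * cfq α m + p * cfp α m) with hydef
  have hx : x * cfq α m + y * cfq α (m+1) = p := by
    rw [hxdef, hydef]
    linear_combination (-(-1:ℤ)^m * p) * hdZ + p * hsZ
  have hy : x * cfp α m + y * cfp α (m+1) = -r := by
    rw [hxdef, hydef]
    linear_combination ((-1:ℤ)^m * r) * hdZ + (-r) * hsZ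
  have hxR : (x:ℝ) * (cfq α m : ℝ) + (y:ℝ) * (cfq α (m+1) : ℝ) = (p:ℝ) := by
    exact_mod_cast congrArg (Int.cast : ℤ → ℝ) hx
  have hyR : (x:ℝ) * (cfp α m : ℝ) + (y:ℝ) * (cfp α (m+1) : ℝ) = -(r:ℝ) := by
    have h := congrArg (Int.cast : ℤ → ℝ) hy
    push_cast at h
    exact h
  have hk1 := key α hα m
  have hk2 := key α hα (m+1)
  have hreal : (r : ℝ) + (p : ℝ) * Int.fract α
      = (-1:ℝ)^m * ((x:ℝ) * Pg α m - (y:ℝ) * Pg α (m+1)) := by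
    have h0 : (r : ℝ) + (p : ℝ) * Int.fract α
        = (x:ℝ) * ((cfq α m : ℝ) * Int.fract α - cfp α m)
          + (y:ℝ) * ((cfq α (m+1) : ℝ) * Int.fract α - cfp α (m+1)) := by
      linear_combination (-Int.fract α) * hxR + hyR
    rw [h0, hk1, hk2]
    ring
  have habs : |(r : ℝ) + (p : ℝ) * Int.fract α|
      = |(x:ℝ) * Pg α m - (y:ℝ) * Pg α (m+1)| := by
    rw [hreal, abs_mul, abs_pow, abs_neg, abs_one, one_pow, one_mul]
  -- lower bound the key quantity by Pg α m
  have hPgm := Pg_pos α hα m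
  have hPg1 := Pg_pos α hα (m+1)
  have hq1 : 1 ≤ cfq α m := cfq_pos α hα m
  have hQ1 : 1 ≤ cfq α (m+1) := cfq_pos α hα (m+1)
  have hmain : Pg α m ≤ |(x:ℝ) * Pg α m - (y:ℝ) * Pg α (m+1)| := by
    rcases eq_or_ne y 0 with hy0 | hy0
    · have hx0 : x ≠ 0 := by
        intro hx0; rw [hx0, hy0] at hx; simp at hx; exact hp hx.symm
      have h1 : (1:ℝ) ≤ |(x:ℝ)| := by exact_mod_cast Int.one_le_abs hx0
      rw [hy0]
      push_cast
      rw [zero_mul, sub_zero, abs_mul, abs_of_pos hPgm]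
      nlinarith
    · rcases eq_or_ne x 0 with hx0 | hx0
      · exfalso
        rw [hx0] at hx; simp at hx
        have h1 : 1 ≤ |y| := Int.one_le_abs hy0
        have : cfq α (m+1) ≤ |p| := by
          calc cfq α (m+1) = 1 * |cfq α (m+1)| := by
                rw [one_mul, abs_of_pos (by omega)]
            _ ≤ |y| * |cfq α (m+1)| := by
                apply mul_le_mul_of_nonneg_right h1 (abs_nonneg _)
            _ = |y * cfq α (m+1)| := (abs_mul _ _).symm
            _ = |p| := by rw [hx]
        omega
      · -- both nonzero: sign analysis
        rcases hx0.lt_or_gt with hxneg | hxpos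
        · rcases hy0.lt_or_gt with hyneg | hypos
          · exfalso
            have hple : -p ≤ |p| := neg_le_abs p
            nlinarith [hx, hlt]
          · -- x ≤ -1, y ≥ 1
            have hxR' : (x:ℝ) ≤ -1 := by exact_mod_cast (by omega : x ≤ -1)
            have hyR' : (1:ℝ) ≤ (y:ℝ) := by exact_mod_cast hypos
            have hE : Pg α m ≤ -((x:ℝ) * Pg α m - (y:ℝ) * Pg α (m+1)) := by nlinarith
            exact hE.trans (neg_le_abs _)
        · rcases hy0.lt_or_gt with hyneg | hypos
          · -- x ≥ 1, y ≤ -1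
            have hxR' : (1:ℝ) ≤ (x:ℝ) := by exact_mod_cast hxpos
            have hyR' : (y:ℝ) ≤ -1 := by exact_mod_cast (by omega : y ≤ -1)
            have hE : Pg α m ≤ (x:ℝ) * Pg α m - (y:ℝ) * Pg α (m+1) := by nlinarith
            exact hE.trans (le_abs_self _)
          · exfalso
            have hple : p ≤ |p| := le_abs_self p
            nlinarith [hx, hlt]
  -- chain of inequalities
  have hqR : (1:ℝ) ≤ (cfq α m : ℝ) := by exact_mod_cast hq1
  have hQR : (1:ℝ) ≤ (cfq α (m+1) : ℝ) := by exact_mod_cast hQ1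
  have hqle : (cfq α m : ℝ) ≤ (cfq α (m+1) : ℝ) := by
    exact_mod_cast cfq_le_succ α hα m
  have hlow := lowerP α hα m
  have h2 : 1 / ((cfq α m : ℝ) + (cfq α (m+1) : ℝ)) ≤ Pg α m := by
    rw [div_le_iff₀ (by linarith)]
    linarith [hlow]
  have h3 : 1 / (2 * (cfq α (m+1) : ℝ)) ≤ 1 / ((cfq α m : ℝ) + (cfq α (m+1) : ℝ)) := by
    apply one_div_le_one_div_of_le (by linarith)
    linarith
  rw [habs]
  linarith

end CFAux

/-- Structure of the sets `Λ₁ᶜ`, `Λ₂ⱼᶜ` of resonant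
frequencies: if `0 < η ≤ 1/(4 q_n^{𝒜⁴})` and `q_{n+l} ≤ q_n^{𝒜⁴}` then every
`0 < |k| < q_{n+l}` satisfies `|⟨k,ω⟩| ≥ η`, and for each sign there is at most
one `k` with `|k| < q_{n+l}/2` and `|2ϱ̃ ∓ ⟨k,ω⟩| < η`. -/
theorem resonant_sites_structure
    (α : ℝ) (hα : Irrational α) (a : ℝ) (ha : 0 < a) (ϱt η : ℝ) (n l : ℕ)
    (hη0 : 0 < η) (hη : η ≤ 1 / (4 * (cfq α n : ℝ) ^ (a^4)))
    (hql : (cfq α (n + l) : ℝ) ≤ (cfq α n : ℝ) ^ (a^4)) :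
    (∀ k : ℤ × ℤ, 0 < |k.1| + |k.2| → knorm k < (cfq α (n+l) : ℝ) →
      η ≤ |kip k α|) ∧
    (∀ k k' : ℤ × ℤ, knorm k < (cfq α (n+l) : ℝ)/2 → knorm k' < (cfq α (n+l) : ℝ)/2 →
      |2*ϱt - kip k α| < η → |2*ϱt - kip k' α| < η → k = k') ∧
    (∀ k k' : ℤ × ℤ, knorm k < (cfq α (n+l) : ℝ)/2 → knorm k' < (cfq α (n+l) : ℝ)/2 →
      |2*ϱt + kip k α| < η → |2*ϱt + kip k' α| < η → k = k') := by
  classical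
  set m := n + l with hm
  have hqn1 : (1:ℝ) ≤ (cfq α n : ℝ) := by exact_mod_cast CFAux.cfq_pos α hα n
  have hQ1 : (1:ℝ) ≤ (cfq α n : ℝ) ^ (a^4) := by
    rw [show (1:ℝ) = 1 ^ (a^4) from (Real.one_rpow _).symm]
    exact Real.rpow_le_rpow (by norm_num) hqn1 (by positivity)
  have hQpos : (0:ℝ) < (cfq α n : ℝ) ^ (a^4) := lt_of_lt_of_le one_pos hQ1
  have hqm1 : (1:ℝ) ≤ (cfq α m : ℝ) := by exact_mod_cast CFAux.cfq_pos α hα m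
  have h2a : 2 * (1/(4 * (cfq α n : ℝ) ^ (a^4))) = 1/(2 * (cfq α n : ℝ) ^ (a^4)) := by
    field_simp; ring
  have h2η : 2*η ≤ 1/(2 * (cfq α n : ℝ) ^ (a^4)) := by
    rw [← h2a]; linarith
  have h2ηhalf : 2*η ≤ 1/2 := by
    have : 1/(2 * (cfq α n : ℝ) ^ (a^4)) ≤ 1/(2:ℝ) := by
      apply one_div_le_one_div_of_le (by norm_num)
      linarith
    linarith
  have key2 : ∀ k : ℤ × ℤ, (k.1 ≠ 0 ∨ k.2 ≠ 0) → knorm k < (cfq α m : ℝ) →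
      2*η ≤ |kip k α| := by
    intro k hk hkn
    rcases eq_or_ne k.2 0 with h2 | h2
    · have h1 : k.1 ≠ 0 := by tauto
      have he : |kip k α| = |(k.1 : ℝ)| := by simp [kip, h2]
      have h1R : (1:ℝ) ≤ |(k.1:ℝ)| := by exact_mod_cast Int.one_le_abs h1
      rw [he]; linarith
    · have habs2 : |k.2| < cfq α m := by
        have h' : ((|k.2| : ℤ) : ℝ) ≤ knorm k := by
          unfold knorm; push_cast
          have := abs_nonneg k.1
          push_cast
          linarith [abs_nonneg (k.1:ℝ)]
        exact_mod_cast lt_of_le_of_lt h' hkn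
      obtain ⟨m', hm'⟩ : ∃ m', m = m' + 1 := by
        cases hmc : m with
        | zero =>
            exfalso
            rw [hmc, CFAux.cfq_zero] at habs2
            exact absurd habs2 (not_lt.2 (Int.one_le_abs h2))
        | succ m' => exact ⟨m', rfl⟩
      rw [hm'] at habs2
      have hba := CFAux.best_approx α hα m' (k.1 + k.2 * ⌊α⌋) k.2 h2 habs2
      have heq : ((k.1 + k.2*⌊α⌋ : ℤ) : ℝ) + ((k.2:ℤ):ℝ) * Int.fract α = kip k α := by
        rw [← Int.self_sub_floor]
        unfold kip
        push_cast
        ring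
      rw [heq] at hba
      have hqmQ : (cfq α (m'+1) : ℝ) ≤ (cfq α n : ℝ) ^ (a^4) := by
        rw [← hm']; exact hql
      have hqm'pos : (0:ℝ) < (cfq α (m'+1) : ℝ) := by
        have : (1:ℝ) ≤ (cfq α (m'+1) : ℝ) := by
          exact_mod_cast CFAux.cfq_pos α hα (m'+1)
        linarith
      have hchain : 1/(2 * (cfq α n : ℝ) ^ (a^4)) ≤ 1/(2*(cfq α (m'+1):ℝ)) := by
        apply one_div_le_one_div_of_le (by linarith)
        linarith
      linarith
  refine ⟨?_, ?_, ?_⟩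
  · intro k h0 hkn
    have hk : k.1 ≠ 0 ∨ k.2 ≠ 0 := by
      by_contra h
      push_neg at h
      rw [h.1, h.2] at h0
      simp at h0
    linarith [key2 k hk hkn]
  · intro k k' hk hk' h1 h2
    by_contra hne
    have hd : (k.1 - k'.1) ≠ 0 ∨ (k.2 - k'.2) ≠ 0 := by
      by_contra h
      push_neg at h
      exact hne (Prod.ext (by omega) (by omega))
    have hdn : knorm (k.1 - k'.1, k.2 - k'.2) < (cfq α m : ℝ) := by
      have e1 : knorm (k.1 - k'.1, k.2 - k'.2) ≤ knorm k + knorm k' := by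
        unfold knorm
        push_cast
        have a1 := abs_sub (k.1:ℝ) (k'.1:ℝ)
        have a2 := abs_sub (k.2:ℝ) (k'.2:ℝ)
        linarith
      linarith
    have hdk := key2 (k.1 - k'.1, k.2 - k'.2) hd hdn
    have hkipd : kip (k.1 - k'.1, k.2 - k'.2) α
        = (2*ϱt - kip k' α) - (2*ϱt - kip k α) := by
      unfold kip; push_cast; ring
    have hlt2 : |kip (k.1 - k'.1, k.2 - k'.2) α| < 2*η := by
      rw [hkipd]
      exact lt_of_le_of_lt (abs_sub _ _) (by linarith)
    linarith
  · intro k k' hk hk' h1 h2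
    by_contra hne
    have hd : (k.1 - k'.1) ≠ 0 ∨ (k.2 - k'.2) ≠ 0 := by
      by_contra h
      push_neg at h
      exact hne (Prod.ext (by omega) (by omega))
    have hdn : knorm (k.1 - k'.1, k.2 - k'.2) < (cfq α m : ℝ) := by
      have e1 : knorm (k.1 - k'.1, k.2 - k'.2) ≤ knorm k + knorm k' := by
        unfold knorm
        push_cast
        have a1 := abs_sub (k.1:ℝ) (k'.1:ℝ)
        have a2 := abs_sub (k.2:ℝ) (k'.2:ℝ)
        linarith
      linarith
    have hdk := key2 (k.1 - k'.1, k.2 - k'.2) hd hdn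
    have hkipd : kip (k.1 - k'.1, k.2 - k'.2) α
        = (2*ϱt + kip k α) - (2*ϱt + kip k' α) := by
      unfold kip; push_cast; ring
    have hlt2 : |kip (k.1 - k'.1, k.2 - k'.2) α| < 2*η := by
      rw [hkipd]
      exact lt_of_le_of_lt (abs_sub _ _) (by linarith)
    linarith

end Paper

end
end

section
/- There is an absolute constant C* ≥ 1 such that for every a ∈ 𝕋, every C¹ map A : ℝ → SL(2,ℝ) with A(x+1) = ±A(x), and every continuous F : 𝕋 → SL(2,ℝ) with ‖F − I‖_{C⁰} ≤ 1/6, one has for all (θ, φ) ∈ 𝕋 × ℝP¹: d(T_{(a, A·F)}(θ, φ), T_{(a, A)}(θ, φ)) ≤ 2C* ‖A‖_{C¹}⁴ ‖F − I‖_{C⁰}, where (A·F)(θ) = A(θ)F(θ). -/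
open Filter MeasureTheory Matrix
open scoped Real Topology ENNReal

noncomputable section

namespace Paper

-- ===== auxiliary lemmas for Statement 18 =====

private def zl (v : Fin 2 → ℝ) : ℂ := v 0 + v 1 * Complex.I

private lemma abs_zl (v : Fin 2 → ℝ) :
    ‖zl v‖ = ‖(WithLp.equiv 2 (Fin 2 → ℝ)).symm v‖ := by
  simp [zl, Complex.norm_def, Complex.normSq_apply, EuclideanSpace.norm_eq,
    Fin.sum_univ_two, Real.norm_eq_abs, sq_abs]
  ring_nf

private lemma abs_zl_mulVec_le (M : M2R) (v : Fin 2 → ℝ) :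
    ‖zl (M *ᵥ v)‖ ≤ opNorm M * ‖zl v‖ := by
  rw [abs_zl, abs_zl]
  have h := (LinearMap.toContinuousLinearMap (Matrix.toEuclideanLin M)).le_opNorm
    ((WithLp.equiv 2 (Fin 2 → ℝ)).symm v)
  simpa [opNorm, Matrix.toEuclideanLin_apply_piLp_toLp] using h

private lemma zl_sub (u v : Fin 2 → ℝ) : zl (u - v) = zl u - zl v := by
  simp [zl]; ring

private lemma cross_mulVec (M : M2R) (v w : Fin 2 → ℝ) :
    (M *ᵥ v) 0 * (M *ᵥ w) 1 - (M *ᵥ v) 1 * (M *ᵥ w) 0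
      = M.det * (v 0 * w 1 - v 1 * w 0) := by
  simp [Matrix.mulVec, dotProduct, Fin.sum_univ_two, Matrix.det_fin_two]
  ring

private lemma abs_cross_le (z w : ℂ) :
    |z.re * w.im - z.im * w.re| ≤ ‖z‖ * ‖w‖ := by
  have h : z.re * w.im - z.im * w.re = ((starRingEnd ℂ) z * w).im := by
    simp [Complex.mul_im]; ring
  rw [h]
  calc |((starRingEnd ℂ) z * w).im| ≤ ‖(starRingEnd ℂ) z * w‖ :=
        Complex.abs_im_le_norm _
    _ = ‖z‖ * ‖w‖ := by simp

private lemma norm_RP1_le (x : ℝ) :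
    4 * ‖((x / (2*π) : ℝ) : RP1)‖ ≤ |Real.sin x| := by
  have hπ : (0:ℝ) < π := Real.pi_pos
  rw [AddCircle.norm_eq]
  have h2 : (((1:ℝ)/2)⁻¹ * (x / (2*π))) = x / π := by field_simp
  rw [h2]
  set k : ℤ := round (x / π) with hk
  have hval : |x / (2*π) - (k:ℝ) * (1/2)| = |x - k*π| / (2*π) := by
    have h : x / (2*π) - (k:ℝ)*(1/2) = (x - k*π)/(2*π) := by field_simp
    rw [h, abs_div, abs_of_pos (show (0:ℝ) < 2*π by positivity)]
  rw [hval]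
  have hb : |x - k*π| ≤ π / 2 := by
    have hr := abs_sub_round (x / π)
    have h3 : |x - k*π| = |x/π - k| * π := by
      have h4 : x - k*π = (x/π - k) * π := by field_simp
      rw [h4, abs_mul, abs_of_pos hπ]
    rw [h3]; nlinarith [abs_nonneg (x/π - k)]
  have hnn : 0 ≤ |x - k*π| := abs_nonneg _
  have h1 : Real.sin (x - k*π) = Real.sin x * (-1:ℝ)^k := by
    rw [Real.sin_sub, Real.sin_int_mul_pi]
    have hc : Real.cos ((k:ℤ) * π) = (-1:ℝ)^k := by
      simpa using Real.cos_int_mul_pi_sub 0 k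
    rw [hc]; ring
  have habs : |Real.sin (x - k*π)| = |Real.sin x| := by
    rw [h1, abs_mul]
    have : |(-1:ℝ)^k| = 1 := by
      rcases Int.even_or_odd k with h | h
      · rw [h.neg_one_zpow]; simp
      · rw [Odd.neg_one_zpow h]; simp
    rw [this, mul_one]
  obtain ⟨hb1, hb2⟩ := abs_le.mp hb
  have hsin : Real.sin |x - k*π| = |Real.sin x| := by
    rw [← habs]
    rcases le_or_gt 0 (x - k*π) with h | h
    · rw [abs_of_nonneg h, abs_of_nonneg
        (Real.sin_nonneg_of_nonneg_of_le_pi h (by linarith))]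
    · rw [abs_of_neg h, Real.sin_neg, abs_of_nonpos
        (Real.sin_nonpos_of_nonpos_of_neg_pi_le (by linarith) (by linarith))]
  have hj : 2/π * |x - k*π| ≤ Real.sin |x - k*π| :=
    Real.mul_le_sin hnn (by linarith)
  rw [← hsin]
  calc 4 * (|x - k*π| / (2*π)) = 2/π * |x - k*π| := by field_simp; ring
    _ ≤ Real.sin |x - k*π| := hj

private lemma dist_arg_le (z w : ℂ) (hz : z ≠ 0) (hw : w ≠ 0) :
    dist (((Complex.arg z / (2*π) : ℝ) : RP1)) (((Complex.arg w / (2*π) : ℝ) : RP1))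
      ≤ 1/4 * (‖z - w‖ / ‖w‖) := by
  have hza : 0 < ‖z‖ := norm_pos_iff.mpr hz
  have hwa : 0 < ‖w‖ := norm_pos_iff.mpr hw
  have hd : dist (((Complex.arg z / (2*π) : ℝ) : RP1)) (((Complex.arg w / (2*π) : ℝ) : RP1))
      = ‖(((Complex.arg z - Complex.arg w) / (2*π) : ℝ) : RP1)‖ := by
    rw [dist_eq_norm]
    congr 1
    rw [← AddCircle.coe_sub]
    congr 1
    ring
  have hsin : Real.sin (Complex.arg z - Complex.arg w)
      = (z.im * w.re - z.re * w.im) / (‖z‖ * ‖w‖) := by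
    rw [Real.sin_sub, Complex.sin_arg, Complex.cos_arg hw, Complex.cos_arg hz,
      Complex.sin_arg]
    field_simp
  have hcross : |z.im * w.re - z.re * w.im| ≤ ‖z‖ * ‖z - w‖ := by
    have h1 : z.im * w.re - z.re * w.im = -(z.re * (w-z).im - z.im * (w-z).re) := by
      simp [Complex.sub_im, Complex.sub_re]; ring
    rw [h1, abs_neg]
    calc |z.re * (w-z).im - z.im * (w-z).re| ≤ ‖z‖ * ‖w - z‖ :=
        abs_cross_le z (w - z)
      _ = ‖z‖ * ‖z - w‖ := by rw [norm_sub_rev]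
  have hs2 : |Real.sin (Complex.arg z - Complex.arg w)|
      ≤ ‖z - w‖ / ‖w‖ := by
    rw [hsin, abs_div, abs_of_pos (by positivity : 0 < ‖z‖ * ‖w‖)]
    rw [div_le_div_iff₀ (by positivity) hwa]
    calc |z.im * w.re - z.re * w.im| * ‖w‖
        ≤ (‖z‖ * ‖z - w‖) * ‖w‖ := by
          exact mul_le_mul_of_nonneg_right hcross hwa.le
      _ = ‖z - w‖ * (‖z‖ * ‖w‖) := by ring
  have h4 := norm_RP1_le (Complex.arg z - Complex.arg w)
  rw [hd]
  linarith

private lemma abs_zl_unit (a b : ℝ) (h : a^2 + b^2 = 1) :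
    ‖zl ![a, b]‖ = 1 := by
  simp only [zl, Matrix.cons_val_zero, Matrix.cons_val_one, Matrix.head_cons]
  rw [Complex.norm_def, Complex.normSq_apply]
  simp only [Complex.add_re, Complex.ofReal_re, Complex.mul_re, Complex.ofReal_im,
    Complex.I_re, Complex.I_im, Complex.add_im, Complex.mul_im]
  have h2 : (a + (b * 0 - 0 * 1)) * (a + (b * 0 - 0 * 1)) +
      (0 + (b * 1 + 0 * 0)) * (0 + (b * 1 + 0 * 0)) = 1 := by nlinarith
  rw [h2, Real.sqrt_one]

private lemma abs_zl_cs (t : ℝ) :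
    ‖zl ![Real.cos (2*π*t), Real.sin (2*π*t)]‖ = 1 :=
  abs_zl_unit _ _ (Real.cos_sq_add_sin_sq (2*π*t))

private lemma abs_zl_sc (t : ℝ) :
    ‖zl ![-Real.sin (2*π*t), Real.cos (2*π*t)]‖ = 1 :=
  abs_zl_unit (-Real.sin (2*π*t)) (Real.cos (2*π*t)) (by nlinarith [Real.sin_sq_add_cos_sq (2*π*t)])

private lemma zl_re (v : Fin 2 → ℝ) : (zl v).re = v 0 := by simp [zl]
private lemma zl_im (v : Fin 2 → ℝ) : (zl v).im = v 1 := by simp [zl]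

private lemma one_le_abs_mul (M : M2R) (hdet : M.det = 1) (t : ℝ) :
    1 ≤ ‖zl (M *ᵥ ![Real.cos (2*π*t), Real.sin (2*π*t)])‖ * opNorm M := by
  set v : Fin 2 → ℝ := ![Real.cos (2*π*t), Real.sin (2*π*t)] with hv
  set w : Fin 2 → ℝ := ![-Real.sin (2*π*t), Real.cos (2*π*t)] with hw
  have hc : (M *ᵥ v) 0 * (M *ᵥ w) 1 - (M *ᵥ v) 1 * (M *ᵥ w) 0 = 1 := by
    rw [cross_mulVec, hdet]
    simp [hv, hw]
    rw [← Real.cos_sq_add_sin_sq (2*π*t)]; ring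
  have h1 : |(zl (M *ᵥ v)).re * (zl (M *ᵥ w)).im - (zl (M *ᵥ v)).im * (zl (M *ᵥ w)).re|
      ≤ ‖zl (M *ᵥ v)‖ * ‖zl (M *ᵥ w)‖ := abs_cross_le _ _
  rw [zl_re, zl_im, zl_re, zl_im, hc, abs_one] at h1
  have h2 : ‖zl (M *ᵥ w)‖ ≤ opNorm M := by
    have := abs_zl_mulVec_le M w
    rwa [hw, abs_zl_sc, mul_one] at this
  calc (1:ℝ) ≤ ‖zl (M *ᵥ v)‖ * ‖zl (M *ᵥ w)‖ := h1
    _ ≤ ‖zl (M *ᵥ v)‖ * opNorm M :=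
        mul_le_mul_of_nonneg_left h2 (norm_nonneg _)

private lemma projAct_eq (M : M2R) (φ : RP1) :
    projAct M φ = ((Complex.arg (zl (M *ᵥ ![Real.cos (2*π*(repHalf φ)),
      Real.sin (2*π*(repHalf φ))])) / (2*π) : ℝ) : RP1) := by
  unfold projAct lineClass dirVec zl
  rw [WithLp.equiv_symm_apply, Matrix.toEuclideanLin_apply_piLp_toLp]

private lemma key_calc (zu zw : ℂ) (nA ε : ℝ) (h1 : 1 ≤ nA) (hε : 0 ≤ ε)
    (hwlow : 1 ≤ ‖zw‖ * nA) (hdiff : ‖zu - zw‖ ≤ nA * ε) :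
    dist (((Complex.arg zu / (2*π) : ℝ) : RP1)) (((Complex.arg zw / (2*π) : ℝ) : RP1))
      ≤ 2 * nA^4 * ε := by
  have hnA0 : 0 < nA := by linarith
  by_cases hc : 1 ≤ nA^2 * ε
  · have hquart : dist ((Complex.arg zu / (2*π) : ℝ) : RP1)
        ((Complex.arg zw / (2*π) : ℝ) : RP1) ≤ 1/4 := by
      rw [dist_eq_norm]
      have := AddCircle.norm_le_half_period ((1:ℝ)/2)
        (x := ((Complex.arg zu / (2*π) : ℝ) : RP1) - ((Complex.arg zw / (2*π) : ℝ) : RP1))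
        (by norm_num)
      exact le_trans this (by rw [abs_of_pos] <;> norm_num)
    refine hquart.trans ?_
    nlinarith [sq_nonneg nA]
  · push_neg at hc
    have hwpos : 0 < ‖zw‖ := by nlinarith [norm_nonneg zw]
    have hwlow' : 1/nA ≤ ‖zw‖ := by
      rw [div_le_iff₀ hnA0]; linarith
    have hupos : 0 < ‖zu‖ := by
      have hns : ‖zw‖ - ‖zu‖ ≤ ‖zu - zw‖ := by
        have := norm_sub_norm_le zw zu
        simpa [norm_sub_rev zw zu] using this
      have : nA * ε < 1 / nA := by
        rw [lt_div_iff₀ hnA0]; nlinarith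
      linarith
    have hz : zu ≠ 0 := by
      intro h; rw [h] at hupos; simp at hupos
    have hw : zw ≠ 0 := by
      intro h; rw [h] at hwpos; simp at hwpos
    refine (dist_arg_le zu zw hz hw).trans ?_
    have hfrac : ‖zu - zw‖ / ‖zw‖ ≤ nA^2 * ε := by
      rw [div_le_iff₀ hwpos]
      nlinarith [mul_le_mul_of_nonneg_left hwlow (mul_nonneg hnA0.le hε)]
    have hq0 : 0 ≤ ‖zu - zw‖ / ‖zw‖ := by positivity
    have hsq : 1 ≤ nA^2 := by nlinarith
    have h24 : nA^2 ≤ nA^4 := by nlinarith [mul_le_mul_of_nonneg_left hsq (sq_nonneg nA)]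
    nlinarith [mul_le_mul_of_nonneg_right h24 hε]

private lemma key_point (P G : M2R) (hdet : P.det = 1) (nA ε : ℝ)
    (hP : opNorm P ≤ nA) (hG : opNorm (G - 1) ≤ ε) (hε : 0 ≤ ε) (φ : RP1) :
    dist (projAct (P * G) φ) (projAct P φ) ≤ 2 * nA^4 * ε := by
  set t := repHalf φ with ht
  set v : Fin 2 → ℝ := ![Real.cos (2*π*t), Real.sin (2*π*t)] with hv
  have habsv : ‖zl v‖ = 1 := abs_zl_cs t
  have hPn : 0 ≤ opNorm P := norm_nonneg _
  have hwlow : 1 ≤ ‖zl (P *ᵥ v)‖ * nA := by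
    have h := one_le_abs_mul P hdet t
    calc (1:ℝ) ≤ ‖zl (P *ᵥ v)‖ * opNorm P := h
      _ ≤ ‖zl (P *ᵥ v)‖ * nA :=
        mul_le_mul_of_nonneg_left hP (norm_nonneg _)
  have h1P : 1 ≤ opNorm P := by
    have h := one_le_abs_mul P hdet t
    have h2 : ‖zl (P *ᵥ v)‖ ≤ opNorm P := by
      have := abs_zl_mulVec_le P v; rwa [habsv, mul_one] at this
    nlinarith [norm_nonneg (zl (P *ᵥ v))]
  have h1 : 1 ≤ nA := h1P.trans hP
  have hnA0 : 0 < nA := by linarith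
  have hdiff : ‖zl ((P * G) *ᵥ v) - zl (P *ᵥ v)‖ ≤ nA * ε := by
    have he : (P * G) *ᵥ v - P *ᵥ v = P *ᵥ ((G - 1) *ᵥ v) := by
      rw [Matrix.sub_mulVec, Matrix.one_mulVec, Matrix.mulVec_sub, Matrix.mulVec_mulVec]
    rw [← zl_sub, he]
    calc ‖zl (P *ᵥ ((G - 1) *ᵥ v))‖
        ≤ opNorm P * ‖zl ((G - 1) *ᵥ v)‖ := abs_zl_mulVec_le _ _
      _ ≤ nA * ε := by
        apply mul_le_mul hP _ (norm_nonneg _) hnA0.le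
        have h5 := abs_zl_mulVec_le (G - 1) v
        rw [habsv, mul_one] at h5
        exact h5.trans hG
  rw [projAct_eq, projAct_eq, ← ht, ← hv]
  exact key_calc _ _ nA ε h1 hε hwlow hdiff

private lemma continuous_opNorm : Continuous opNorm := by
  have h : Continuous fun M : M2R =>
      (LinearMap.toContinuousLinearMap (Matrix.toEuclideanLin M)) :=
    LinearMap.continuous_of_finiteDimensional
      ((Matrix.toEuclideanLin.trans LinearMap.toContinuousLinearMap :
        M2R ≃ₗ[ℝ] _).toLinearMap)
  exact continuous_norm.comp h

private lemma opNorm_neg' (M : M2R) : opNorm (-M) = opNorm M := by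
  unfold opNorm
  rw [map_neg, map_neg, norm_neg]


/-- Perturbation estimate for projective actions:
`d(T_{(a,AF)}(θ,φ), T_{(a,A)}(θ,φ)) ≤ 2C* ‖A‖_{C¹}⁴ ‖F - I‖_{C⁰}` whenever
`‖F - I‖_{C⁰} ≤ 1/6`. -/
theorem projective_action_perturbation :
    ∃ Cs : ℝ, 1 ≤ Cs ∧
      ∀ (aT : T1) (A : ℝ → M2R),
        (∀ (i j : Fin 2), ContDiff ℝ 1 fun x => A x i j) → SL2V A → PMPeriodic A →
      ∀ F : T1 → M2R, Continuous F → SL2V F →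
        normC0T (fun x => F x - 1) ≤ 1/6 →
      ∀ p : T1 × RP1,
        dist (TprojR aT (fun x => A x * F ((x : ℝ) : T1)) p) (TprojR aT A p)
          ≤ 2 * Cs * normC1R A ^ 4 * normC0T (fun x => F x - 1) := by
  refine ⟨1, le_refl 1, fun aT A hA hSLA hPM F hF hSLF _hF6 p => ?_⟩
  set ε := normC0T (fun x => F x - 1) with hεdef
  have hcontF : Continuous fun y : T1 => opNorm (F y - 1) :=
    continuous_opNorm.comp (hF.sub continuous_const)
  have hbddF : BddAbove (Set.range fun y : T1 => opNorm (F y - 1)) :=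
    (isCompact_range hcontF).bddAbove
  have hεx : ∀ y : T1, opNorm (F y - 1) ≤ ε := fun y => le_ciSup hbddF y
  have hε0 : 0 ≤ ε := le_trans (norm_nonneg _) (hεx ((0:ℝ) : T1))
  have hAc : Continuous A :=
    continuous_pi fun i => continuous_pi fun j => (hA i j).continuous
  have hper : Function.Periodic (fun x => opNorm (A x)) 1 := by
    intro x
    show opNorm (A (x + 1)) = opNorm (A x)
    rcases hPM x with h | h
    · rw [h]
    · rw [h, opNorm_neg']
  have hcontA : Continuous fun x => opNorm (A x) := continuous_opNorm.comp hAc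
  have hbddA : BddAbove (Set.range fun x => opNorm (A x)) := by
    have himg : (Set.range fun x => opNorm (A x))
        ⊆ (fun x => opNorm (A x)) '' Set.Icc 0 1 := by
      rintro y ⟨x, rfl⟩
      refine ⟨Int.fract x, ⟨Int.fract_nonneg x, (Int.fract_lt_one x).le⟩, ?_⟩
      have h := hper.sub_int_mul_eq (x := x) (n := ⌊x⌋)
      show opNorm (A (Int.fract x)) = opNorm (A x)
      rw [← Int.self_sub_floor x]
      simpa using h
    exact ((isCompact_Icc.image hcontA).bddAbove).mono himg
  have hnAx : ∀ x : ℝ, opNorm (A x) ≤ normC1R A := fun x =>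
    le_trans (le_ciSup hbddA x) (le_max_left _ _)
  set x0 := rep1 p.1 with hx0
  have hkey := key_point (A x0) (F ((x0 : ℝ) : T1)) (hSLA x0) (normC1R A) ε
    (hnAx x0) (hεx _) hε0 p.2
  calc dist (TprojR aT (fun x => A x * F ((x : ℝ) : T1)) p) (TprojR aT A p)
      = dist (projAct (A x0 * F ((x0 : ℝ) : T1)) p.2) (projAct (A x0) p.2) := by
        unfold TprojR
        rw [Prod.dist_eq]
        simp only [dist_self]
        exact max_eq_right dist_nonneg
    _ ≤ 2 * normC1R A ^ 4 * ε := hkey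
    _ = 2 * 1 * normC1R A ^ 4 * ε := by ring

end Paper

end
end
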